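/- Let V be an abelian group and τ an additive automorphism of V. Let a, s₀, s₁, …, s_t be elements of V, let p₁, …, p_t be positive integers, let p̄ be a positive common multiple of p₁, …, p_t, and let χ be an integer. Assume: (i) τ(s₀) = s₀; (ii) Σ_{j=0}^{pᵢ−1} τʲ(sᵢ) = s₀ for each i = 1, …, t; (iii) τ(a) − a = −Σ_{i=1}^{t} sᵢ + (t − χ)·s₀. Then τ^{p̄}(a) − a = (Σ_{i=1}^{t}(p̄ − p̄/pᵢ) − p̄·χ)·s₀. -/

import Mathlib

private lemma tau_telescope {V : Type*} [AddCommGroup V] (τ : AddAut V) (a : V) (n : ℕ) :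
    (n • τ) a - a = ∑ k ∈ Finset.range n, (k • τ) (τ a - a) := by
  induction n with
  | zero => simp
  | succ n ih =>
    rw [Finset.sum_range_succ, ← ih, map_sub]
    have : ((n + 1) • τ) a = (n • τ) (τ a) := by
      rw [succ_nsmul]; rfl
    rw [this]
    abel

private lemma tau_fix {V : Type*} [AddCommGroup V] (τ : AddAut V) {s₀ : V}
    (h₀ : τ s₀ = s₀) (n : ℕ) : (n • τ) s₀ = s₀ := by
  induction n with
  | zero => rfl
  | succ n ih =>
    have : ((n + 1) • τ) s₀ = (n • τ) (τ s₀) := by rw [succ_nsmul]; rfl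
    rw [this, h₀, ih]

private lemma tau_blocks {V : Type*} [AddCommGroup V] (τ : AddAut V) {s₀ x : V}
    (h₀ : τ s₀ = s₀) (q : ℕ) (hx : ∑ j ∈ Finset.range q, (j • τ) x = s₀) (m : ℕ) :
    ∑ k ∈ Finset.range (m * q), (k • τ) x = m • s₀ := by
  induction m with
  | zero => simp
  | succ m ih =>
    have : (m + 1) * q = m * q + q := by ring
    rw [this, Finset.sum_range_add, ih]
    have : ∑ i ∈ Finset.range q, ((m * q + i) • τ) x = ((m * q) • τ) s₀ := by
      rw [← hx, map_sum]
      refine Finset.sum_congr rfl fun j _ => ?_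
      rw [add_nsmul]; rfl
    rw [this, tau_fix τ h₀, succ_nsmul]

theorem tau_pow_structure_sheaf (V : Type*) [AddCommGroup V] (τ : AddAut V)
    (a s₀ : V) (t : ℕ) (s : Fin t → V) (p : Fin t → ℕ) (hp : ∀ i, 0 < p i)
    (pbar : ℕ) (hpbar : 0 < pbar) (hdvd : ∀ i, p i ∣ pbar) (χ : ℤ)
    (h₀ : τ s₀ = s₀)
    (h₁ : ∀ i, ∑ j ∈ Finset.range (p i), (j • τ) (s i) = s₀)
    (h₂ : τ a - a = -(∑ i, s i) + ((t : ℤ) - χ) • s₀) :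
    (pbar • τ) a - a =
      ((∑ i, ((pbar : ℤ) - ((pbar / p i : ℕ) : ℤ))) - (pbar : ℤ) * χ) • s₀ := by
  have key : ∀ i, ∑ k ∈ Finset.range pbar, (k • τ) (s i) = (pbar / p i) • s₀ := by
    intro i
    have h : pbar / p i * p i = pbar := Nat.div_mul_cancel (hdvd i)
    conv_lhs => rw [← h]
    exact tau_blocks τ h₀ (p i) (h₁ i) _
  rw [tau_telescope]
  have step : ∀ k : ℕ, (k • τ) (τ a - a) =
      -(∑ i, (k • τ) (s i)) + ((t : ℤ) - χ) • s₀ := by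
    intro k
    rw [h₂, map_add, map_neg, map_sum, map_zsmul, tau_fix τ h₀]
  simp only [step, Finset.sum_add_distrib, Finset.sum_neg_distrib, Finset.sum_const,
    Finset.card_range]
  rw [Finset.sum_comm]
  simp only [key]
  have : ∑ i : Fin t, (pbar / p i) • s₀ = (∑ i : Fin t, ((pbar / p i : ℕ) : ℤ)) • s₀ := by
    rw [Finset.sum_smul]
    exact Finset.sum_congr rfl fun i _ => (natCast_zsmul s₀ _).symm
  rw [this, ← natCast_zsmul _ pbar, smul_smul, ← neg_smul, ← add_smul]
  congr 1
  rw [Finset.sum_sub_distrib, Finset.sum_const, Finset.card_univ, Fintype.card_fin]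
  push_cast
  ring
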